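/- Let G = (V,E) be a finite simple graph and let S ⊆ V be a locating-dominating set of G. Then S is a locating-dominating set of the complement graph Ḡ if and only if S is a dominating set of Ḡ. -/
import Mathlib


open SimpleGraph

/-- `S` is a dominating set of `G`: every vertex outside `S` has a neighbor in `S`. -/
def isDomSet {α : Type*} (G : SimpleGraph α) (S : Set α) : Prop :=
  ∀ v ∉ S, ∃ u ∈ S, G.Adj v u

/-- `S` is a locating-dominating set (LD-set) of `G`. -/
def isLDSet {α : Type*} (G : SimpleGraph α) (S : Set α) : Prop :=
  isDomSet G S ∧ ∀ u ∉ S, ∀ v ∉ S, u ≠ v →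
    G.neighborSet u ∩ S ≠ G.neighborSet v ∩ S

/-- The location-domination number `λ(G)`. -/
noncomputable def ldNum {α : Type*} (G : SimpleGraph α) : ℕ :=
  sInf {n | ∃ S : Set α, isLDSet G S ∧ S.ncard = n}

/-- The global location-domination number `λ_g(G)`. -/
noncomputable def gldNum {α : Type*} (G : SimpleGraph α) : ℕ :=
  sInf {n | ∃ S : Set α, isLDSet G S ∧ isLDSet Gᶜ S ∧ S.ncard = n}

/-- `G` is bipartite with stable sets `U` and `W`. -/
def bipartiteWith {α : Type*} (G : SimpleGraph α) (U W : Set α) : Prop :=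
  U ∪ W = Set.univ ∧ Disjoint U W ∧
    ∀ ⦃u v : α⦄, G.Adj u v → (u ∈ U ∧ v ∈ W) ∨ (u ∈ W ∧ v ∈ U)

theorem stmt0 {V : Type*} [Fintype V] (G : SimpleGraph V) (S : Set V)
    (hS : isLDSet G S) :
    isLDSet Gᶜ S ↔ isDomSet Gᶜ S := by
  constructor
  · exact fun h => h.1
  · intro hdom
    refine ⟨hdom, fun u hu v hv huv hEq => ?_⟩
    apply hS.2 u hu v hv huv
    ext w
    simp only [Set.mem_inter_iff, SimpleGraph.mem_neighborSet]
    constructor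
    · rintro ⟨haw, hwS⟩
      refine ⟨?_, hwS⟩
      by_contra hnadj
      have hw : w ∈ Gᶜ.neighborSet v ∩ S :=
        ⟨(G.compl_adj v w).mpr ⟨fun h => hv (h ▸ hwS), hnadj⟩, hwS⟩
      rw [← hEq] at hw
      exact hw.1.2 haw
    · rintro ⟨haw, hwS⟩
      refine ⟨?_, hwS⟩
      by_contra hnadj
      have hw : w ∈ Gᶜ.neighborSet u ∩ S :=
        ⟨(G.compl_adj u w).mpr ⟨fun h => hu (h ▸ hwS), hnadj⟩, hwS⟩
      rw [hEq] at hw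
      exact hw.1.2 haw
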